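/- arXiv:2605.09643 — 2 statements merged into one kernel-verified Lean document; each statement's English description precedes it below -/
import Mathlib

section
/- (Differential Representer Theorem) Fix points X^{(1)}, …, X^{(N)} ∈ D̄ and values Y_N = (Y^{(1)}, …, Y^{(N)}) ∈ ℝ^N, and let λ > 0. The unique minimizer û_{λ,N} over H_K of the regularized empirical risk R̂_{λ,N}(u) = (1/N) Σ_{i=1}^N |P_s u(X^{(i)}) − Y^{(i)}|² + λ‖u‖²_{H_K} can be represented as û_{λ,N} = Σ_{i=1}^N ĉ_i · P_s^{(1,0)}K(X^{(i)},·), where the coefficient vector ĉ ∈ ℝ^N is given by ĉ = (G + λN·I)^{-1} Y_N, with G the N × N generalized Gram matrix G_{ij} = P_s^{(1,1)}K(X^{(i)}, X^{(j)}) and I the N × N identity matrix (G + λN·I is invertible since G is positive semidefinite). -/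
open MeasureTheory RealInnerProductSpace
open Matrix

noncomputable section

/-- The set `I_s` of multi-indices `α ∈ ℕ^d` with `|α| ≤ s`. -/
def Is (d s : ℕ) : Finset (Fin d → ℕ) :=
  (Fintype.piFinset fun _ : Fin d => Finset.range (s + 1)).filter fun α => (∑ i, α i) ≤ s

/-- `P_s u` evaluated pointwise, where `Dk α u x` stands for `(∂^α u)(x)`. -/
def Psu {Xt H : Type*} (d s : ℕ) (φ : (Fin d → ℕ) → Xt → ℝ)
    (Dk : (Fin d → ℕ) → H → Xt → ℝ) (u : H) (x : Xt) : ℝ :=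
  ∑ α ∈ Is d s, φ α x * Dk α u x

/-- `P_s^{(1,0)} K (x, ·) = ∑_{α ∈ I_s} φ_α(x) • ∂^α_{(1)} K(x,·) ∈ H_K`. -/
def KP {Xt H : Type*} [NormedAddCommGroup H] [InnerProductSpace ℝ H]
    (d s : ℕ) (φ : (Fin d → ℕ) → Xt → ℝ) (k : (Fin d → ℕ) → Xt → H) (x : Xt) : H :=
  ∑ α ∈ Is d s, φ α x • k α x


theorem representer_aux {H : Type*} [NormedAddCommGroup H] [InnerProductSpace ℝ H]
    {N : ℕ} (w : Fin N → H) (Y : Fin N → ℝ) {lam : ℝ} (hlam : 0 < lam)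
    (G : Matrix (Fin N) (Fin N) ℝ) (hG : ∀ i j, G i j = ⟪w i, w j⟫) :
    IsUnit (G + (lam * N) • (1 : Matrix (Fin N) (Fin N) ℝ)) ∧
    ∀ u : H, (∀ v : H,
      (N : ℝ)⁻¹ * (∑ i, (⟪u, w i⟫ - Y i) ^ 2) + lam * ‖u‖ ^ 2
        ≤ (N : ℝ)⁻¹ * (∑ i, (⟪v, w i⟫ - Y i) ^ 2) + lam * ‖v‖ ^ 2) ↔
      u = ∑ i, ((G + (lam * N) • (1 : Matrix (Fin N) (Fin N) ℝ))⁻¹.mulVec Y) i • w i := by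
  classical
  set M : Matrix (Fin N) (Fin N) ℝ := G + (lam * N) • (1 : Matrix (Fin N) (Fin N) ℝ) with hM
  -- Hermitian
  have hMH : M.IsHermitian := by
    unfold Matrix.IsHermitian
    ext i j
    simp [hM, Matrix.conjTranspose_apply, Matrix.add_apply, Matrix.smul_apply,
      Matrix.one_apply, hG, real_inner_comm, eq_comm]
  -- quadratic form of G
  have hquad : ∀ x : Fin N → ℝ, x ⬝ᵥ (G *ᵥ x) = ⟪∑ i, x i • w i, ∑ i, x i • w i⟫ := by
    intro x
    rw [sum_inner]
    simp only [dotProduct, Matrix.mulVec, inner_sum, real_inner_smul_left,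
      real_inner_smul_right, hG, Finset.mul_sum]
    refine Finset.sum_congr rfl fun i _ => Finset.sum_congr rfl fun j _ => by ring
  have hMpd : M.PosDef := by
    refine Matrix.PosDef.of_dotProduct_mulVec_pos hMH fun x hx => ?_
    have hNpos : 0 < (N : ℝ) := by
      have : N ≠ 0 := by rintro rfl; exact hx (Subsingleton.elim _ _)
      exact_mod_cast Nat.pos_of_ne_zero this
    obtain ⟨i0, hi0⟩ := Function.ne_iff.1 hx
    have hxx : (0:ℝ) < x ⬝ᵥ x := by
      refine Finset.sum_pos' (fun i _ => mul_self_nonneg _) ⟨i0, Finset.mem_univ _, ?_⟩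
      exact mul_self_pos.2 hi0
    have hstar : star x = x := by simp
    rw [hstar, hM, Matrix.add_mulVec, Matrix.smul_mulVec, Matrix.one_mulVec,
      dotProduct_add, dotProduct_smul]
    have h1 : (0:ℝ) ≤ x ⬝ᵥ (G *ᵥ x) := by rw [hquad]; exact real_inner_self_nonneg
    have h2 : 0 < lam * N * (x ⬝ᵥ x) := by positivity
    simpa using by linarith
  have hMunit : IsUnit M := hMpd.isUnit
  have hMinv : M * M⁻¹ = 1 :=
    Matrix.mul_nonsing_inv M ((Matrix.isUnit_iff_isUnit_det M).1 hMunit)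
  set c : Fin N → ℝ := M⁻¹.mulVec Y with hc
  have hMY : M.mulVec c = Y := by
    rw [hc, Matrix.mulVec_mulVec, hMinv, Matrix.one_mulVec]
  set uh : H := ∑ i, c i • w i with huh
  have hinner : ∀ i, ⟪uh, w i⟫ = (G *ᵥ c) i := by
    intro i
    rw [huh, sum_inner]
    simp only [Matrix.mulVec, dotProduct, real_inner_smul_left, hG]
    exact Finset.sum_congr rfl fun j _ => by rw [real_inner_comm]; ring
  have hcoef : ∀ i, ⟪uh, w i⟫ - Y i = -(lam * N * c i) := by
    intro i
    have h1 : M.mulVec c i = Y i := congrFun hMY i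
    have h2 : M.mulVec c i = G.mulVec c i + lam * N * c i := by
      rw [hM, Matrix.add_mulVec, Matrix.smul_mulVec, Matrix.one_mulVec]
      simp [mul_assoc]
    rw [hinner]
    rw [h2] at h1
    linarith
  have hcross : ∀ h : H,
      (N : ℝ)⁻¹ * (∑ i, (⟪uh, w i⟫ - Y i) * ⟪h, w i⟫) + lam * ⟪uh, h⟫ = 0 := by
    intro h
    have hhu : ⟪h, uh⟫ = ∑ i, c i * ⟪h, w i⟫ := by
      rw [huh, inner_sum]
      exact Finset.sum_congr rfl fun i _ => by rw [real_inner_smul_right]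
    have hsum : ∑ i, (⟪uh, w i⟫ - Y i) * ⟪h, w i⟫ = -(lam * N) * ⟪h, uh⟫ := by
      rw [hhu, Finset.mul_sum]
      refine Finset.sum_congr rfl fun i _ => by rw [hcoef]; ring
    rw [hsum, real_inner_comm uh h]
    rcases Nat.eq_zero_or_pos N with hN | hN
    · subst hN
      have : uh = 0 := by rw [huh]; exact Finset.sum_of_isEmpty _
      simp [this]
    · have hN' : (N : ℝ) ≠ 0 := by positivity
      field_simp
      ring
  have hexp : ∀ v : H,
      (N : ℝ)⁻¹ * (∑ i, (⟪v, w i⟫ - Y i) ^ 2) + lam * ‖v‖ ^ 2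
        = ((N : ℝ)⁻¹ * (∑ i, (⟪uh, w i⟫ - Y i) ^ 2) + lam * ‖uh‖ ^ 2)
          + ((N : ℝ)⁻¹ * (∑ i, ⟪v - uh, w i⟫ ^ 2) + lam * ‖v - uh‖ ^ 2) := by
    intro v
    have hv : v = uh + (v - uh) := by abel
    set h : H := v - uh with hh
    rw [hv]
    have h1 : ∀ i, (⟪uh + h, w i⟫ - Y i) ^ 2
        = (⟪uh, w i⟫ - Y i) ^ 2 + 2 * ((⟪uh, w i⟫ - Y i) * ⟪h, w i⟫) + ⟪h, w i⟫ ^ 2 := by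
      intro i; rw [inner_add_left]; ring
    rw [Finset.sum_congr rfl fun i _ => h1 i, Finset.sum_add_distrib, Finset.sum_add_distrib,
      ← Finset.mul_sum, norm_add_sq_real]
    linear_combination 2 * hcross h
  have hmin : ∀ v : H,
      (N : ℝ)⁻¹ * (∑ i, (⟪uh, w i⟫ - Y i) ^ 2) + lam * ‖uh‖ ^ 2
        ≤ (N : ℝ)⁻¹ * (∑ i, (⟪v, w i⟫ - Y i) ^ 2) + lam * ‖v‖ ^ 2 := by
    intro v
    rw [hexp v]
    have h1 : (0:ℝ) ≤ (N : ℝ)⁻¹ * (∑ i, ⟪v - uh, w i⟫ ^ 2) := by positivity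
    have h2 : (0:ℝ) ≤ lam * ‖v - uh‖ ^ 2 := by positivity
    linarith
  refine ⟨hMunit, fun u => ⟨fun hu => ?_, fun hu => hu ▸ hmin⟩⟩
  have h1 := hu uh
  have h2 := hexp u
  have h3 : (0:ℝ) ≤ (N : ℝ)⁻¹ * (∑ i, ⟪u - uh, w i⟫ ^ 2) := by positivity
  have h4 : lam * ‖u - uh‖ ^ 2 ≤ 0 := by linarith
  have h5 : ‖u - uh‖ ^ 2 ≤ 0 := by nlinarith
  have h6 : u - uh = 0 := by
    have := le_antisymm h5 (by positivity)
    simpa [pow_eq_zero_iff] using this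
  rw [sub_eq_zero.1 h6, huh]

/-- **Differential Representer Theorem.** For `λ > 0` the regularized empirical risk
`R̂_{λ,N}(u) = (1/N) ∑ᵢ |P_s u(X⁽ⁱ⁾) − Y⁽ⁱ⁾|² + λ‖u‖²` has a unique minimizer over `H_K`,
the matrix `G + λN·I` is invertible (where `G_{ij} = P_s^{(1,1)}K(X⁽ⁱ⁾,X⁽ʲ⁾)`), and the
minimizer is `û_{λ,N} = ∑ᵢ ĉᵢ • P_s^{(1,0)}K(X⁽ⁱ⁾,·)` with `ĉ = (G + λN·I)⁻¹ Y_N`. -/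
theorem statement_9
    {Xt H : Type*} [MeasurableSpace Xt]
    [NormedAddCommGroup H] [InnerProductSpace ℝ H] [CompleteSpace H]
    (d s : ℕ)
    (φ : (Fin d → ℕ) → Xt → ℝ)
    (Dk : (Fin d → ℕ) → H → Xt → ℝ)
    (k : (Fin d → ℕ) → Xt → H)
    (C κ : ℝ) (hC0 : 0 ≤ C) (hκ0 : 0 ≤ κ)
    (hC : ∀ α ∈ Is d s, ∀ x : Xt, |φ α x| ≤ C)
    (hκ : ∀ α ∈ Is d s, ∀ x : Xt, ‖k α x‖ ≤ κ)
    (hrep : ∀ α ∈ Is d s, ∀ (u : H) (x : Xt), Dk α u x = ⟪u, k α x⟫)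
    (N : ℕ) (X : Fin N → Xt) (Y : Fin N → ℝ)
    (lam : ℝ) (hlam : 0 < lam)
    (G : Matrix (Fin N) (Fin N) ℝ)
    (hG : G = Matrix.of fun i j : Fin N => ⟪KP d s φ k (X i), KP d s φ k (X j)⟫) :
    IsUnit (G + (lam * N) • (1 : Matrix (Fin N) (Fin N) ℝ)) ∧
    (∃! u : H, ∀ v : H,
      (N : ℝ)⁻¹ * (∑ i : Fin N, (Psu d s φ Dk u (X i) - Y i) ^ 2) + lam * ‖u‖ ^ 2
        ≤ (N : ℝ)⁻¹ * (∑ i : Fin N, (Psu d s φ Dk v (X i) - Y i) ^ 2) + lam * ‖v‖ ^ 2) ∧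
    ∀ u : H, (∀ v : H,
        (N : ℝ)⁻¹ * (∑ i : Fin N, (Psu d s φ Dk u (X i) - Y i) ^ 2) + lam * ‖u‖ ^ 2
          ≤ (N : ℝ)⁻¹ * (∑ i : Fin N, (Psu d s φ Dk v (X i) - Y i) ^ 2) + lam * ‖v‖ ^ 2) →
      u = ∑ i : Fin N,
        ((G + (lam * N) • (1 : Matrix (Fin N) (Fin N) ℝ))⁻¹.mulVec Y) i • KP d s φ k (X i) := by
  have hPsu : ∀ (u : H) (i : Fin N), Psu d s φ Dk u (X i) = ⟪u, KP d s φ k (X i)⟫ := by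
    intro u i
    unfold Psu KP
    rw [inner_sum]
    refine Finset.sum_congr rfl fun α hα => ?_
    rw [hrep α hα u (X i), real_inner_smul_right]
  obtain ⟨h1, h2⟩ := representer_aux (fun i => KP d s φ k (X i)) Y hlam G
    (by intro i j; rw [hG]; rfl)
  refine ⟨h1, ⟨_, fun v => ?_, fun u hu => (h2 u).1 fun v => ?_⟩, fun u hu => (h2 u).1 fun v => ?_⟩
  · simp only [hPsu]
    exact (h2 _).2 rfl v
  · have := hu v
    simpa only [hPsu] using this
  · have := hu v
    simpa only [hPsu] using this
end
end

section
/- Let H be a real Hilbert space and B : H → H a compact, self-adjoint, positive semidefinite operator with spectral decomposition B = Σ_n λ_n ⟨·, e_n⟩ e_n, where λ_n > 0 and (e_n) is an orthonormal family. Let γ ∈ (0,1), λ > 0, and suppose u ∈ H lies in the range of B^γ, say u = B^γ ψ with ψ ∈ (ker B)^⊥. Then ‖(B + λI)^{-1} B u − u‖_H = ‖λ (B + λI)^{-1} u‖_H ≤ λ^γ ‖ψ‖_H. -/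
open RealInnerProductSpace

noncomputable section

section Aux
set_option linter.unusedSectionVars false
set_option linter.unusedSectionVars false

variable {H : Type*} [NormedAddCommGroup H] [InnerProductSpace ℝ H] [CompleteSpace H]
  {ι : Type*} {e : ι → H}

lemma aux_summable_smul (hON : Orthonormal ℝ e) {c : ι → ℝ}
    (hc : Summable fun n => c n ^ 2) : Summable fun n => c n • e n := by
  have h := (hON.orthogonalFamily.summable_iff_norm_sq_summable c).2
    (by simpa [Real.norm_eq_abs, sq_abs] using hc)
  simpa [LinearIsometry.toSpanSingleton_apply] using h

lemma aux_inner_tsum (hON : Orthonormal ℝ e) {c : ι → ℝ}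
    (hc : Summable fun n => c n • e n) (n : ι) :
    ⟪∑' m, c m • e m, e n⟫ = c n := by
  rw [real_inner_comm]
  have h1 : ⟪e n, ∑' m, c m • e m⟫ = ∑' m, c m * ⟪e n, e m⟫ := by
    simpa using ContinuousLinearMap.map_tsum (innerSL ℝ (e n)) hc
  rw [h1, tsum_eq_single n]
  · simp [real_inner_self_eq_norm_sq, hON.1 n]
  · intro m hm
    simp [hON.2 hm.symm]

lemma aux_norm_tsum_sq (hON : Orthonormal ℝ e) {c : ι → ℝ}
    (hc2 : Summable fun n => c n ^ 2) :
    ‖∑' n, c n • e n‖ ^ 2 = ∑' n, c n ^ 2 := by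
  have hc := aux_summable_smul hON hc2
  have h1 : ⟪∑' n, c n • e n, ∑' m, c m • e m⟫ = ∑' m, c m * ⟪∑' n, c n • e n, e m⟫ := by
    simpa using ContinuousLinearMap.map_tsum (innerSL ℝ (∑' n, c n • e n)) hc
  rw [← real_inner_self_eq_norm_sq, h1]
  exact tsum_congr fun n => by rw [aux_inner_tsum hON hc n]; ring

end Aux

set_option maxHeartbeats 1000000

/-- Let `B` be a compact, self-adjoint, positive semidefinite operator on a real Hilbert
space with spectral decomposition `B = ∑ₙ λₙ ⟨·, eₙ⟩ eₙ` (`λₙ > 0`, `(eₙ)` orthonormal),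
let `γ ∈ (0,1)`, `λ > 0`, and `u = B^γ ψ` with `ψ ∈ (ker B)^⊥` (where
`B^γ v = ∑ₙ λₙ^γ ⟨v, eₙ⟩ eₙ`). Then
`‖(B + λI)⁻¹ B u − u‖ = ‖λ (B + λI)⁻¹ u‖ ≤ λ^γ ‖ψ‖`; here `w = (B + λI)⁻¹ u` and
`z = (B + λI)⁻¹ B u` are characterized by `B w + λ w = u` and `B z + λ z = B u`. -/
theorem statement_15
    {H : Type*} [NormedAddCommGroup H] [InnerProductSpace ℝ H] [CompleteSpace H]
    {ι : Type*} (B : H →L[ℝ] H)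
    (hcomp : IsCompactOperator ⇑B) (hsa : IsSelfAdjoint B) (hpos : B.IsPositive)
    (l : ι → ℝ) (e : ι → H) (hl : ∀ n, 0 < l n) (hON : Orthonormal ℝ e)
    (hB : ∀ v : H, B v = ∑' n : ι, (l n * ⟪v, e n⟫) • e n)
    (γ : ℝ) (hγ : γ ∈ Set.Ioo (0 : ℝ) 1) (lam : ℝ) (hlam : 0 < lam)
    (u ψ : H) (hψ : ψ ∈ (LinearMap.ker (B : H →ₗ[ℝ] H))ᗮ)
    (hu : u = ∑' n : ι, (l n ^ γ * ⟪ψ, e n⟫) • e n)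
    (w z : H) (hw : B w + lam • w = u) (hz : B z + lam • z = B u) :
    ‖z - u‖ = ‖lam • w‖ ∧ ‖lam • w‖ ≤ lam ^ γ * ‖ψ‖ := by
  obtain ⟨hγ0, hγ1⟩ := hγ
  -- injectivity of B + lam
  have hinj : ∀ d : H, B d + lam • d = 0 → d = 0 := by
    intro d hd
    have h0 : ⟪B d + lam • d, d⟫ = 0 := by rw [hd]; simp
    rw [inner_add_left, real_inner_smul_left] at h0
    have h1 : 0 ≤ ⟪B d, d⟫ := by simpa using hpos.inner_nonneg_left d
    have h3 : ⟪d, d⟫ = ‖d‖ ^ 2 := real_inner_self_eq_norm_sq d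
    have h4 : ‖d‖ ^ 2 ≤ 0 := by nlinarith [sq_nonneg ‖d‖]
    have h5 : ‖d‖ ^ 2 = 0 := le_antisymm h4 (sq_nonneg _)
    exact norm_eq_zero.mp (pow_eq_zero_iff two_ne_zero |>.mp h5)
  -- part 1
  have hkey : z - u = -(lam • w) := by
    have h1 : B (z - u + lam • w) + lam • (z - u + lam • w)
        = (B z + lam • z) - (B u + lam • u) + lam • (B w + lam • w) := by
      simp only [map_add, map_sub, map_smul, smul_add, smul_sub]
      abel
    have hd : B (z - u + lam • w) + lam • (z - u + lam • w) = 0 := by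
      rw [h1, hz, hw]; abel
    exact eq_neg_of_add_eq_zero_left (hinj _ hd)
  have part1 : ‖z - u‖ = ‖lam • w‖ := by rw [hkey, norm_neg]
  -- eigen relation
  have hBe : ∀ n, B (e n) = l n • e n := by
    intro n
    rw [hB (e n), tsum_eq_single n]
    · simp [real_inner_self_eq_norm_sq, hON.1 n]
    · intro m hm
      simp [hON.2 hm.symm]
  -- bound on eigenvalues
  have hlB : ∀ n, l n ≤ ‖B‖ := by
    intro n
    have h1 : ‖B (e n)‖ ≤ ‖B‖ * ‖e n‖ := B.le_opNorm _
    rw [hBe n, norm_smul, Real.norm_eq_abs, abs_of_pos (hl n), hON.1 n, mul_one, mul_one] at h1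
    exact h1
  have hden : ∀ n, 0 < l n + lam := fun n => by linarith [hl n]
  have hpγ : ∀ n, 0 < l n ^ γ := fun n => Real.rpow_pos_of_pos (hl n) γ
  have hBγ : ∀ n, l n ^ γ ≤ ‖B‖ ^ γ := fun n => Real.rpow_le_rpow (hl n).le (hlB n) hγ0.le
  -- Bessel coefficients of ψ
  have hc2 : Summable fun n => (⟪ψ, e n⟫ : ℝ) ^ 2 := by
    have h := Orthonormal.inner_products_summable (𝕜 := ℝ) (x := ψ) hON
    simpa [real_inner_comm, Real.norm_eq_abs, sq_abs] using h
  -- comparison helper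
  have hsq : ∀ (f : ι → ℝ) (K : ℝ), (∀ n, |f n| ≤ K * |⟪ψ, e n⟫|) →
      Summable fun n => f n ^ 2 := by
    intro f K hf
    apply Summable.of_nonneg_of_le (fun n => sq_nonneg _) _ (hc2.mul_left (K ^ 2))
    intro n
    have h := hf n
    have h2 : (0:ℝ) ≤ |⟪ψ, e n⟫| := abs_nonneg _
    have h3 : (0:ℝ) ≤ |f n| := abs_nonneg _
    calc f n ^ 2 = |f n| ^ 2 := (sq_abs _).symm
    _ ≤ (K * |⟪ψ, e n⟫|) ^ 2 := by nlinarith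
    _ = K ^ 2 * ⟪ψ, e n⟫ ^ 2 := by rw [mul_pow, sq_abs]
  -- the coefficients
  set a : ι → ℝ := fun n => l n ^ γ * ⟪ψ, e n⟫ with hadef
  set b : ι → ℝ := fun n => l n ^ γ * ⟪ψ, e n⟫ / (l n + lam) with hbdef
  have ha_bound : ∀ n, |a n| ≤ ‖B‖ ^ γ * |⟪ψ, e n⟫| := by
    intro n
    rw [hadef, abs_mul, abs_of_pos (hpγ n)]
    exact mul_le_mul_of_nonneg_right (hBγ n) (abs_nonneg _)
  have habs_b : ∀ n, |b n| = l n ^ γ * |⟪ψ, e n⟫| / (l n + lam) := by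
    intro n
    rw [hbdef]
    simp only []
    rw [abs_div, abs_of_pos (hden n), abs_mul, abs_of_pos (hpγ n)]
  have hBγ0 : (0:ℝ) ≤ ‖B‖ ^ γ := Real.rpow_nonneg (norm_nonneg B) γ
  have hb_bound : ∀ n, |b n| ≤ (‖B‖ ^ γ / lam) * |⟪ψ, e n⟫| := by
    intro n
    rw [habs_b n, div_le_iff₀ (hden n), div_mul_eq_mul_div, div_mul_eq_mul_div,
      le_div_iff₀ hlam]
    nlinarith [mul_le_mul_of_nonneg_right (hBγ n) (abs_nonneg (⟪ψ, e n⟫ : ℝ)),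
      mul_nonneg hBγ0 (abs_nonneg (⟪ψ, e n⟫ : ℝ)), hl n, hlam]
  have hlb_bound : ∀ n, |l n * b n| ≤ ‖B‖ ^ γ * |⟪ψ, e n⟫| := by
    intro n
    rw [abs_mul, abs_of_pos (hl n), habs_b n, mul_div_assoc', div_le_iff₀ (hden n)]
    nlinarith [mul_le_mul_of_nonneg_right (hBγ n) (abs_nonneg (⟪ψ, e n⟫ : ℝ)),
      mul_nonneg hBγ0 (abs_nonneg (⟪ψ, e n⟫ : ℝ)), hl n, hlam]
  -- the key concavity estimate
  have hconc : ∀ n, lam * l n ^ γ ≤ lam ^ γ * (l n + lam) := by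
    intro n
    have hgm := Real.geom_mean_le_arith_mean2_weighted (by linarith : (0:ℝ) ≤ 1 - γ)
      hγ0.le hlam.le (hl n).le (by ring : 1 - γ + γ = 1)
    have h1 : lam ^ γ * lam ^ (1 - γ) = lam := by
      rw [← Real.rpow_add hlam]
      norm_num
    have hlamγ : (0:ℝ) ≤ lam ^ γ := (Real.rpow_pos_of_pos hlam γ).le
    calc lam * l n ^ γ = lam ^ γ * (lam ^ (1 - γ) * l n ^ γ) := by rw [← mul_assoc, h1]
    _ ≤ lam ^ γ * ((1 - γ) * lam + γ * l n) :=
        mul_le_mul_of_nonneg_left hgm hlamγ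
    _ ≤ lam ^ γ * (l n + lam) := by
        apply mul_le_mul_of_nonneg_left _ hlamγ
        nlinarith [(hl n).le, hlam.le]
  have hlamb_bound : ∀ n, |lam * b n| ≤ lam ^ γ * |⟪ψ, e n⟫| := by
    intro n
    rw [abs_mul, abs_of_pos hlam, habs_b n, mul_div_assoc', div_le_iff₀ (hden n)]
    nlinarith [mul_le_mul_of_nonneg_right (hconc n) (abs_nonneg (⟪ψ, e n⟫ : ℝ))]
  -- summabilities
  have hsa2 : Summable fun n => a n ^ 2 := hsq a (‖B‖ ^ γ) ha_bound
  have hsb2 : Summable fun n => b n ^ 2 := hsq b (‖B‖ ^ γ / lam) hb_bound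
  have hsummu : Summable fun n => a n • e n := aux_summable_smul hON hsa2
  have hw0sum : Summable fun n => b n • e n := aux_summable_smul hON hsb2
  have hun : ∀ n, ⟪u, e n⟫ = a n := by
    intro n
    rw [hu]
    exact aux_inner_tsum hON hsummu n
  -- w equals the explicit series w0
  have hw0n : ∀ n, ⟪(∑' m, b m • e m : H), e n⟫ = b n := fun n => aux_inner_tsum hON hw0sum n
  have hBw0 : B (∑' m, b m • e m) = ∑' n, (l n * b n) • e n := by
    rw [hB (∑' m, b m • e m)]
    exact tsum_congr fun n => by rw [hw0n n]
  have hlamw0 : lam • (∑' m, b m • e m : H) = ∑' n, (lam * b n) • e n := by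
    rw [← Summable.tsum_const_smul lam hw0sum]
    exact tsum_congr fun n => by rw [smul_smul]
  have hsum_lb : Summable fun n => (l n * b n) • e n :=
    aux_summable_smul hON (hsq _ _ hlb_bound)
  have hsum_lamb : Summable fun n => (lam * b n) • e n :=
    aux_summable_smul hON (hsq _ _ hlamb_bound)
  have hw0eq : B (∑' m, b m • e m) + lam • (∑' m, b m • e m : H) = u := by
    rw [hBw0, hlamw0, ← Summable.tsum_add hsum_lb hsum_lamb, hu]
    apply tsum_congr
    intro n
    rw [← add_smul]
    congr 1
    rw [hbdef]
    have hne : l n + lam ≠ 0 := (hden n).ne'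
    field_simp
  have hweq : w = ∑' m, b m • e m := by
    have h1 : B (w - ∑' m, b m • e m) + lam • (w - ∑' m, b m • e m)
        = (B w + lam • w) - (B (∑' m, b m • e m) + lam • (∑' m, b m • e m : H)) := by
      rw [map_sub, smul_sub]
      abel
    have hd : B (w - ∑' m, b m • e m) + lam • (w - ∑' m, b m • e m) = 0 := by
      rw [h1, hw, hw0eq, sub_self]
    exact sub_eq_zero.mp (hinj _ hd)
  -- Parseval and the final estimate
  have hnorm : ‖lam • w‖ ^ 2 = ∑' n, (lam * b n) ^ 2 := by
    rw [hweq, hlamw0]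
    exact aux_norm_tsum_sq hON (hsq _ _ hlamb_bound)
  have hbes : ∑' n, (⟪ψ, e n⟫ : ℝ) ^ 2 ≤ ‖ψ‖ ^ 2 := by
    have h := Orthonormal.tsum_inner_products_le (𝕜 := ℝ) (x := ψ) hON
    simpa [real_inner_comm, Real.norm_eq_abs, sq_abs] using h
  have hlamγ : (0:ℝ) ≤ lam ^ γ := (Real.rpow_pos_of_pos hlam γ).le
  have hle : ∑' n, (lam * b n) ^ 2 ≤ (lam ^ γ) ^ 2 * ‖ψ‖ ^ 2 := by
    calc ∑' n, (lam * b n) ^ 2 ≤ ∑' n, (lam ^ γ) ^ 2 * (⟪ψ, e n⟫ : ℝ) ^ 2 := by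
          apply Summable.tsum_le_tsum _ (hsq _ _ hlamb_bound) (hc2.mul_left _)
          intro n
          have h := hlamb_bound n
          have h2 := abs_nonneg (lam * b n)
          calc (lam * b n) ^ 2 = |lam * b n| ^ 2 := (sq_abs _).symm
          _ ≤ (lam ^ γ * |⟪ψ, e n⟫|) ^ 2 := by
              nlinarith [abs_nonneg (⟪ψ, e n⟫ : ℝ), mul_nonneg hlamγ (abs_nonneg (⟪ψ, e n⟫ : ℝ))]
          _ = (lam ^ γ) ^ 2 * (⟪ψ, e n⟫ : ℝ) ^ 2 := by rw [mul_pow, sq_abs]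
    _ = (lam ^ γ) ^ 2 * ∑' n, (⟪ψ, e n⟫ : ℝ) ^ 2 := tsum_mul_left
    _ ≤ (lam ^ γ) ^ 2 * ‖ψ‖ ^ 2 := mul_le_mul_of_nonneg_left hbes (sq_nonneg _)
  have part2 : ‖lam • w‖ ≤ lam ^ γ * ‖ψ‖ := by
    have h1 : ‖lam • w‖ ^ 2 ≤ (lam ^ γ * ‖ψ‖) ^ 2 := by
      rw [hnorm]
      calc ∑' n, (lam * b n) ^ 2 ≤ (lam ^ γ) ^ 2 * ‖ψ‖ ^ 2 := hle
      _ = (lam ^ γ * ‖ψ‖) ^ 2 := by ring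
    have h2 := Real.sqrt_le_sqrt h1
    rwa [Real.sqrt_sq (norm_nonneg _), Real.sqrt_sq (mul_nonneg hlamγ (norm_nonneg ψ))] at h2
  exact ⟨part1, part2⟩
end
end
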